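/- (Gradient equivalence, key cancellation step) Let π_θ(·|s) be a parameterized positive density on A and q(·|s) a fixed positive density, α ∈ (0,1), and R^{π_θ,α}(s,a) = απ_θ(a|s)/(απ_θ(a|s)+(1−α)q(a|s)). Then α E_{a∼π_θ}[∇_θ log R^{π_θ,α}(s,a)] + (1−α) E_{a∼q}[∇_θ log(1−R^{π_θ,α}(s,a))] = 0. -/

import Mathlib

/-- gradient cancellation:
`α E_{a∼π_θ}[∇_θ log R^{π_θ,α}] + (1-α) E_{a∼q}[∇_θ log(1 − R^{π_θ,α})] = 0`. -/
theorem ratio_gradient_cancellation {A : Type*} [Fintype A]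
    (p : ℝ → A → ℝ) (q : A → ℝ) (α : ℝ) (hα : α ∈ Set.Ioo (0:ℝ) 1)
    (hp : ∀ θ a, 0 < p θ a) (hq : ∀ a, 0 < q a)
    (hp1 : ∀ θ, ∑ a, p θ a = 1) (hq1 : ∑ a, q a = 1)
    (hdiff : ∀ a θ, DifferentiableAt ℝ (fun t => p t a) θ) (θ : ℝ) :
    α * ∑ a, p θ a *
        deriv (fun t => Real.log (α * p t a / (α * p t a + (1 - α) * q a))) θ
      + (1 - α) * ∑ a, q a *
          deriv (fun t => Real.log (1 - α * p t a / (α * p t a + (1 - α) * q a))) θ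
      = 0 := by
  obtain ⟨hα0, hα1⟩ := hα
  set d : A → ℝ := fun a => deriv (fun t => p t a) θ with hd
  have hα1' : (0:ℝ) < 1 - α := by linarith
  have hD : ∀ t a, 0 < α * p t a + (1 - α) * q a := fun t a =>
    add_pos (mul_pos hα0 (hp t a)) (mul_pos hα1' (hq a))
  have hder : ∀ a, HasDerivAt (fun t => p t a) (d a) θ := fun a => (hdiff a θ).hasDerivAt
  have hdsum : ∑ a, d a = 0 := by
    have h1 : deriv (fun t => ∑ a, p t a) θ = ∑ a, d a := by
      rw [deriv_fun_sum (fun a _ => hdiff a θ)]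
    have h2 : (fun t => ∑ a, p t a) = fun _ => (1:ℝ) := funext fun t => hp1 t
    rw [h2, deriv_const] at h1
    exact h1.symm
  have hlogR : ∀ a, deriv (fun t => Real.log (α * p t a / (α * p t a + (1 - α) * q a))) θ
      = d a / p θ a - α * d a / (α * p θ a + (1 - α) * q a) := by
    intro a
    have hnum : HasDerivAt (fun t => α * p t a) (α * d a) θ := (hder a).const_mul α
    have hden : HasDerivAt (fun t => α * p t a + (1 - α) * q a) (α * d a) θ :=
      hnum.add_const ((1 - α) * q a)
    have h1 : HasDerivAt (fun t => Real.log (α * p t a)) (α * d a / (α * p θ a)) θ :=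
      hnum.log (mul_pos hα0 (hp θ a)).ne'
    have h2 : HasDerivAt (fun t => Real.log (α * p t a + (1 - α) * q a))
        (α * d a / (α * p θ a + (1 - α) * q a)) θ := hden.log (ne_of_gt (hD θ a))
    have heq : (fun t => Real.log (α * p t a / (α * p t a + (1 - α) * q a)))
        = fun t => Real.log (α * p t a) - Real.log (α * p t a + (1 - α) * q a) := by
      funext t
      rw [Real.log_div (mul_pos hα0 (hp t a)).ne' (ne_of_gt (hD t a))]
    rw [heq, (h1.fun_sub h2).deriv]
    have hpa := hp θ a
    have h3 : α * d a / (α * p θ a) = d a / p θ a := by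
      rw [mul_div_mul_left _ _ (ne_of_gt hα0)]
    rw [h3]
  have hlog1R : ∀ a, deriv (fun t => Real.log (1 - α * p t a / (α * p t a + (1 - α) * q a))) θ
      = -(α * d a / (α * p θ a + (1 - α) * q a)) := by
    intro a
    have heq : (fun t => Real.log (1 - α * p t a / (α * p t a + (1 - α) * q a)))
        = fun t => Real.log ((1 - α) * q a) - Real.log (α * p t a + (1 - α) * q a) := by
      funext t
      have h1 : 1 - α * p t a / (α * p t a + (1 - α) * q a)
          = (1 - α) * q a / (α * p t a + (1 - α) * q a) := by
        rw [one_sub_div (hD t a).ne']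
        congr 1
        ring
      rw [h1, Real.log_div (mul_pos hα1' (hq a)).ne' (ne_of_gt (hD t a))]
    have h2 : HasDerivAt (fun t => Real.log (α * p t a + (1 - α) * q a))
        (α * d a / (α * p θ a + (1 - α) * q a)) θ :=
      (((hder a).const_mul α).add_const _).log (ne_of_gt (hD θ a))
    rw [heq, ((hasDerivAt_const θ _).fun_sub h2).deriv]
    ring
  simp only [hlogR, hlog1R]
  rw [Finset.mul_sum, Finset.mul_sum, ← Finset.sum_add_distrib]
  have key : ∀ a ∈ Finset.univ (α := A),
      α * (p θ a * (d a / p θ a - α * d a / (α * p θ a + (1 - α) * q a)))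
        + (1 - α) * (q a * -(α * d a / (α * p θ a + (1 - α) * q a))) = 0 := by
    intro a _
    have hpa := (hp θ a).ne'
    have hDa := (hD θ a).ne'
    field_simp
    ring
  rw [Finset.sum_congr rfl key, Finset.sum_const, smul_zero]
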